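/- Suppose A is a separable unital complex Banach algebra, G is a compact topological group (with its Borel σ-algebra), and ρ : G → A is a Borel-measurable map such that every ρ(u) is invertible and, for all u, v ∈ G, ‖ρ(u)⁻¹‖ ≤ κ and ‖ρ(uv) − ρ(u)ρ(v)‖ ≤ ε, where κ, ε are positive constants with ε < κ⁻². Then there is a Borel-measurable map ρ̃ : G → A such that every ρ̃(u) is invertible and: (1) for all u ∈ G, ‖ρ̃(u) − ρ(u)‖ ≤ κε; (2) for all u ∈ G, ‖ρ̃(u)⁻¹‖ ≤ κ/(1 − κ²ε); and (3) for all u, v ∈ G, ‖ρ̃(uv) − ρ̃(u)ρ̃(v)‖ ≤ 2κ²ε². -/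

import Mathlib

open MeasureTheory Filter Topology
open scoped ENNReal

universe u v

-- measurability of Ring.inverse
theorem measurable_ringInverse {A : Type*} [NormedRing A] [CompleteSpace A]
    [MeasurableSpace A] [BorelSpace A] :
    Measurable (Ring.inverse : A → A) := by
  have hU : IsOpen {x : A | IsUnit x} := Units.isOpen
  have hcont : ContinuousOn (Ring.inverse : A → A) {x : A | IsUnit x} := by
    intro x hx
    obtain ⟨u, rfl⟩ := hx
    exact (NormedRing.inverse_continuousAt u).continuousWithinAt
  refine measurable_of_isOpen fun s hs => ?_
  have hsplit : (Ring.inverse : A → A) ⁻¹' s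
      = ({x : A | IsUnit x} ∩ (Ring.inverse : A → A) ⁻¹' s)
        ∪ ({x : A | IsUnit x}ᶜ ∩ (Ring.inverse : A → A) ⁻¹' s) := by
    rw [← Set.union_inter_distrib_right, Set.union_compl_self, Set.univ_inter]
  rw [hsplit]
  refine MeasurableSet.union (hcont.isOpen_inter_preimage hU hs).measurableSet ?_
  by_cases h0 : (0 : A) ∈ s
  · have h2 : {x : A | IsUnit x}ᶜ ∩ (Ring.inverse : A → A) ⁻¹' s = {x : A | IsUnit x}ᶜ := by
      ext x
      simp only [Set.mem_inter_iff, Set.mem_compl_iff, Set.mem_setOf_eq, Set.mem_preimage]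
      exact ⟨fun h => h.1, fun h => ⟨h, by rw [Ring.inverse_non_unit x h]; exact h0⟩⟩
    rw [h2]; exact hU.measurableSet.compl
  · have h2 : {x : A | IsUnit x}ᶜ ∩ (Ring.inverse : A → A) ⁻¹' s = (∅ : Set A) := by
      ext x
      simp only [Set.mem_inter_iff, Set.mem_compl_iff, Set.mem_setOf_eq, Set.mem_preimage,
        Set.mem_empty_iff_false, iff_false, not_and]
      intro h hs'
      rw [Ring.inverse_non_unit x h] at hs'
      exact h0 hs'
    rw [h2]; exact MeasurableSet.empty

-- geometric bound
theorem norm_inverse_one_sub_mul_le {A : Type*} [NormedRing A] [CompleteSpace A]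
    {z w : A} (hz : ‖z‖ < 1) {C : ℝ} (hw : ‖w‖ ≤ C) :
    ‖Ring.inverse (1 - z) * w‖ ≤ (1 - ‖z‖)⁻¹ * C := by
  have hC : 0 ≤ C := le_trans (norm_nonneg _) hw
  have hsum := summable_geometric_of_norm_lt_one (x := z) hz
  have h1 : Ring.inverse (1 - z) * w = ∑' n : ℕ, z ^ n * w := by
    rw [← geom_series_eq_inverse z hz, hsum.tsum_mul_right]
  rw [h1]
  refine tsum_of_norm_bounded ((hasSum_geometric_of_lt_one (norm_nonneg z) hz).mul_right C) ?_
  intro n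
  match n with
  | 0 => simpa using hw
  | Nat.succ m =>
    calc ‖z ^ (m + 1) * w‖ ≤ ‖z ^ (m + 1)‖ * ‖w‖ := norm_mul_le _ _
      _ ≤ ‖z‖ ^ (m + 1) * C :=
        mul_le_mul (norm_pow_le' z m.succ_pos) hw (norm_nonneg _)
          (pow_nonneg (norm_nonneg _) _)

/-- Averaging an approximately multiplicative Borel map from a compact group into the
invertible elements of a separable Banach algebra yields a Borel map which is much
closer to being multiplicative. -/
theorem approximate_multiplicativity_improvement
    {G : Type u} {A : Type v}
    [Group G] [TopologicalSpace G] [IsTopologicalGroup G] [CompactSpace G] [T2Space G]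
    [MeasurableSpace G] [BorelSpace G]
    [NormedRing A] [NormedAlgebra ℂ A] [CompleteSpace A]
    [TopologicalSpace.SeparableSpace A] [MeasurableSpace A] [BorelSpace A]
    (κ ε : ℝ) (hκ : 0 < κ) (hε : 0 < ε) (hεκ : ε < κ⁻¹ ^ 2)
    (ρ : G → A) (hmeas : Measurable ρ) (hinv : ∀ u : G, IsUnit (ρ u))
    (hbound : ∀ u : G, ‖Ring.inverse (ρ u)‖ ≤ κ)
    (hmul : ∀ u v : G, ‖ρ (u * v) - ρ u * ρ v‖ ≤ ε) :
    ∃ ρ' : G → A, Measurable ρ' ∧ (∀ u : G, IsUnit (ρ' u)) ∧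
      (∀ u : G, ‖ρ' u - ρ u‖ ≤ κ * ε) ∧
      (∀ u : G, ‖Ring.inverse (ρ' u)‖ ≤ κ / (1 - κ ^ 2 * ε)) ∧
      (∀ u v : G, ‖ρ' (u * v) - ρ' u * ρ' v‖ ≤ 2 * κ ^ 2 * ε ^ 2) := by
  haveI : SecondCountableTopology A := UniformSpace.secondCountable_of_separable A
  haveI : Nonempty G := ⟨1⟩
  set μ : Measure G := Measure.haarMeasure (⊤ : TopologicalSpace.PositiveCompacts G) with hμ
  haveI : IsProbabilityMeasure μ :=
    ⟨by rw [← TopologicalSpace.PositiveCompacts.coe_top (α := G), Measure.haarMeasure_self]⟩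
  haveI : Fact ((1:ℝ≥0∞) ≤ 1) := ⟨le_refl _⟩
  -- notation
  set h : G → A := fun w => Ring.inverse (ρ w) with hh
  have hhmeas : Measurable h := measurable_ringInverse.comp hmeas
  have hhb : ∀ w, ‖h w‖ ≤ κ := fun w => hbound w
  -- uniform bound on ρ
  set C : ℝ := κ * (‖ρ 1‖ + ε) with hC
  have hρb : ∀ u, ‖ρ u‖ ≤ C := by
    intro u
    have h2 := hmul u u⁻¹
    rw [mul_inv_cancel] at h2
    have h2' : ‖ρ u * ρ u⁻¹‖ ≤ ‖ρ 1‖ + ε := by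
      linarith [norm_sub_norm_le (ρ u * ρ u⁻¹) (ρ 1), norm_sub_rev (ρ u * ρ u⁻¹) (ρ 1), h2]
    have h3 : ρ u = ρ u * ρ u⁻¹ * Ring.inverse (ρ u⁻¹) := by
      rw [mul_assoc, Ring.mul_inverse_cancel _ (hinv u⁻¹), mul_one]
    calc ‖ρ u‖ = ‖ρ u * ρ u⁻¹ * Ring.inverse (ρ u⁻¹)‖ := by rw [← h3]
      _ ≤ ‖ρ u * ρ u⁻¹‖ * ‖Ring.inverse (ρ u⁻¹)‖ := norm_mul_le _ _
      _ ≤ (‖ρ 1‖ + ε) * κ := by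
          refine mul_le_mul h2' (hbound u⁻¹) (norm_nonneg _) ?_
          positivity
      _ = C := by rw [hC]; ring
  have hCpos : 0 ≤ C := le_trans (norm_nonneg _) (hρb 1)
  -- integrability helper
  have hint : ∀ (g : G → A) (M : ℝ), Measurable g → (∀ w, ‖g w‖ ≤ M) → Integrable g μ := by
    intro g M hg hM
    exact ⟨hg.aestronglyMeasurable, HasFiniteIntegral.of_bounded (C := M) (.of_forall hM)⟩
  -- norm of integral helper
  have hnormint : ∀ (g : G → A) (M : ℝ), (∀ w, ‖g w‖ ≤ M) → ‖∫ w, g w ∂μ‖ ≤ M := by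
    intro g M hM
    calc ‖∫ w, g w ∂μ‖ ≤ M * (μ Set.univ).toReal :=
          norm_integral_le_of_norm_le_const (.of_forall hM)
      _ = M := by simp
  -- the averaged map
  set f : G → G → A := fun u w => ρ (u * w) * h w with hf
  have hfmeas : ∀ u, Measurable (f u) :=
    fun u => (hmeas.comp (measurable_const_mul u)).mul hhmeas
  have hfb : ∀ u w, ‖f u w‖ ≤ C * κ := by
    intro u w
    exact (norm_mul_le _ _).trans (mul_le_mul (hρb _) (hhb w) (norm_nonneg _) hCpos)
  have hfint : ∀ u, Integrable (f u) μ := fun u => hint (f u) (C * κ) (hfmeas u) (hfb u)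
  set ρ' : G → A := fun u => ∫ w, f u w ∂μ with hρ'
  -- key pointwise estimate
  have key1 : ∀ u w, ‖f u w - ρ u‖ ≤ κ * ε := by
    intro u w
    have hrw : f u w - ρ u = (ρ (u * w) - ρ u * ρ w) * h w := by
      rw [hf, sub_mul, hh, mul_assoc, Ring.mul_inverse_cancel _ (hinv w), mul_one]
    rw [hrw]
    calc ‖(ρ (u * w) - ρ u * ρ w) * h w‖ ≤ ‖ρ (u * w) - ρ u * ρ w‖ * ‖h w‖ := norm_mul_le _ _
      _ ≤ ε * κ := mul_le_mul (hmul u w) (hhb w) (norm_nonneg _) hε.le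
      _ = κ * ε := mul_comm _ _
  -- closeness
  have hclose : ∀ u, ‖ρ' u - ρ u‖ ≤ κ * ε := by
    intro u
    have : ρ' u - ρ u = ∫ w, (f u w - ρ u) ∂μ := by
      rw [integral_sub (hfint u) (integrable_const _), integral_const, probReal_univ,
        one_smul]
    rw [this]
    exact hnormint _ _ (key1 u)
  -- invertibility data
  have hκ2ε : κ ^ 2 * ε < 1 := by
    rw [inv_pow] at hεκ
    have := mul_lt_mul_of_pos_left hεκ (pow_pos hκ 2)
    rwa [mul_inv_cancel₀ (by positivity : (κ:ℝ) ^ 2 ≠ 0)] at this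
  set z : G → A := fun u => -(Ring.inverse (ρ u) * (ρ' u - ρ u)) with hz
  have hzb : ∀ u, ‖z u‖ ≤ κ ^ 2 * ε := by
    intro u
    rw [hz]
    calc ‖-(Ring.inverse (ρ u) * (ρ' u - ρ u))‖ = ‖Ring.inverse (ρ u) * (ρ' u - ρ u)‖ :=
          norm_neg _
      _ ≤ ‖Ring.inverse (ρ u)‖ * ‖ρ' u - ρ u‖ := norm_mul_le _ _
      _ ≤ κ * (κ * ε) := mul_le_mul (hbound u) (hclose u) (norm_nonneg _) hκ.le
      _ = κ ^ 2 * ε := by ring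
  have hzlt : ∀ u, ‖z u‖ < 1 := fun u => lt_of_le_of_lt (hzb u) hκ2ε
  have hval : ∀ u, ρ u * (1 - z u) = ρ' u := by
    intro u
    have hc : ρ u * Ring.inverse (ρ u) = 1 := Ring.mul_inverse_cancel _ (hinv u)
    rw [hz]
    calc ρ u * (1 - -(Ring.inverse (ρ u) * (ρ' u - ρ u)))
        = ρ u + ρ u * Ring.inverse (ρ u) * (ρ' u - ρ u) := by noncomm_ring
      _ = ρ u + (ρ' u - ρ u) := by rw [hc, one_mul]
      _ = ρ' u := by abel
  have hunit : ∀ u, IsUnit (ρ' u) := by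
    intro u
    rw [← hval u]
    exact (hinv u).mul (Units.oneSub (z u) (hzlt u)).isUnit
  -- inverse formula and bound
  have hinvρ' : ∀ u, Ring.inverse (ρ' u) = Ring.inverse (1 - z u) * Ring.inverse (ρ u) := by
    intro u
    have h1 : ρ' u = ((hinv u).unit * Units.oneSub (z u) (hzlt u) : Aˣ) := by
      rw [Units.val_mul, IsUnit.unit_spec, Units.val_oneSub, hval u]
    rw [h1, Ring.inverse_unit, mul_inv_rev, Units.val_mul,
      NormedRing.inverse_one_sub (z u) (hzlt u)]
    congr 1
    rw [← Ring.inverse_unit, IsUnit.unit_spec]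
  have hinvb : ∀ u, ‖Ring.inverse (ρ' u)‖ ≤ κ / (1 - κ ^ 2 * ε) := by
    intro u
    rw [hinvρ' u]
    calc ‖Ring.inverse (1 - z u) * Ring.inverse (ρ u)‖ ≤ (1 - ‖z u‖)⁻¹ * κ :=
          norm_inverse_one_sub_mul_le (hzlt u) (hbound u)
      _ ≤ (1 - κ ^ 2 * ε)⁻¹ * κ := by
          have h1 : (0:ℝ) < 1 - κ ^ 2 * ε := by linarith
          have h2 : (1:ℝ) - κ ^ 2 * ε ≤ 1 - ‖z u‖ := by linarith [hzb u]
          exact mul_le_mul_of_nonneg_right (inv_anti₀ h1 h2) hκ.le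
      _ = κ / (1 - κ ^ 2 * ε) := by rw [div_eq_inv_mul]
  -- approximate multiplicativity of the average
  have hmul' : ∀ u v, ‖ρ' (u * v) - ρ' u * ρ' v‖ ≤ 2 * κ ^ 2 * ε ^ 2 := by
    intro u v
    have hfuvmeas : Measurable (fun t => f u (v * t)) := (hfmeas u).comp (measurable_const_mul v)
    have hfuvb : ∀ t : G, ‖f u (v * t)‖ ≤ C * κ := fun t => hfb u (v * t)
    have habove : ∀ t : G, ‖f u (v * t) - ρ' u‖ ≤ 2 * (κ * ε) := by
      intro t
      have hd : f u (v * t) - ρ' u = (f u (v * t) - ρ u) + (ρ u - ρ' u) := by abel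
      rw [hd]
      calc ‖(f u (v * t) - ρ u) + (ρ u - ρ' u)‖
          ≤ ‖f u (v * t) - ρ u‖ + ‖ρ u - ρ' u‖ := norm_add_le _ _
        _ ≤ κ * ε + κ * ε := by
            refine add_le_add (key1 u (v * t)) ?_
            rw [norm_sub_rev]; exact hclose u
        _ = 2 * (κ * ε) := by ring
    have hsubmeas : Measurable (fun t => f u (v * t) - ρ' u) := hfuvmeas.sub measurable_const
    have hsubint : Integrable (fun t => f u (v * t) - ρ' u) μ :=
      hint _ (2 * (κ * ε)) hsubmeas habove
    have hA : ρ' (u * v) = ∫ t, f u (v * t) * f v t ∂μ := by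
      have hptwise : ∀ t, f (u * v) t = f u (v * t) * f v t := by
        intro t
        show ρ ((u * v) * t) * h t = (ρ (u * (v * t)) * h (v * t)) * (ρ (v * t) * h t)
        rw [mul_assoc (ρ (u * (v * t))) (h (v * t)) _,
          ← mul_assoc (h (v * t)) (ρ (v * t)) (h t), hh]
        rw [Ring.inverse_mul_cancel _ (hinv (v * t)), one_mul, mul_assoc u v t]
      calc ρ' (u * v) = ∫ t, f (u * v) t ∂μ := rfl
        _ = ∫ t, f u (v * t) * f v t ∂μ := integral_congr_ae (.of_forall hptwise)
    have hB : ρ' u * ρ' v = ∫ t, ρ' u * f v t ∂μ := by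
      have h1 := (ContinuousLinearMap.mul ℂ A (ρ' u)).integral_comp_comm (hfint v)
      simpa using h1.symm
    have hzero : ∫ t, (f u (v * t) - ρ' u) ∂μ = 0 := by
      rw [integral_sub (hint _ _ hfuvmeas hfuvb) (integrable_const _), integral_const,
        probReal_univ, one_smul]
      have h2 : ∫ t, f u (v * t) ∂μ = ∫ t, f u t ∂μ := integral_mul_left_eq_self (f u) v
      rw [h2]
      exact sub_self _
    have hzero2 : ∫ t, (f u (v * t) - ρ' u) * ρ v ∂μ = 0 := by
      have h1 := ((ContinuousLinearMap.mul ℂ A).flip (ρ v)).integral_comp_comm hsubint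
      simp only [ContinuousLinearMap.flip_apply, ContinuousLinearMap.mul_apply'] at h1
      rw [h1, hzero, zero_mul]
    have hint1 : Integrable (fun t => f u (v * t) * f v t) μ := by
      refine hint _ ((C * κ) * (C * κ)) (hfuvmeas.mul (hfmeas v)) fun t => ?_
      exact (norm_mul_le _ _).trans
        (mul_le_mul (hfuvb t) (hfb v t) (norm_nonneg _) (by positivity))
    have hint2 : Integrable (fun t => ρ' u * f v t) μ := by
      refine hint _ (‖ρ' u‖ * (C * κ)) (measurable_const.mul (hfmeas v)) fun t => ?_
      exact (norm_mul_le _ _).trans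
        (mul_le_mul_of_nonneg_left (hfb v t) (norm_nonneg _))
    have hint3 : Integrable (fun t => (f u (v * t) - ρ' u) * ρ v) μ := by
      refine hint _ (2 * (κ * ε) * ‖ρ v‖) (hsubmeas.mul measurable_const) fun t => ?_
      exact (norm_mul_le _ _).trans
        (mul_le_mul_of_nonneg_right (habove t) (norm_nonneg _))
    have hkey2 : ∀ t : G, ‖(f u (v * t) - ρ' u) * (f v t - ρ v)‖ ≤ 2 * κ ^ 2 * ε ^ 2 := by
      intro t
      calc ‖(f u (v * t) - ρ' u) * (f v t - ρ v)‖
          ≤ ‖f u (v * t) - ρ' u‖ * ‖f v t - ρ v‖ := norm_mul_le _ _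
        _ ≤ (2 * (κ * ε)) * (κ * ε) := by
            refine mul_le_mul (habove t) (key1 v t) (norm_nonneg _) (by positivity)
        _ = 2 * κ ^ 2 * ε ^ 2 := by ring
    have hint4 : Integrable (fun t => (f u (v * t) - ρ' u) * (f v t - ρ v)) μ :=
      hint _ (2 * κ ^ 2 * ε ^ 2) (hsubmeas.mul ((hfmeas v).sub measurable_const)) hkey2
    have hD : ρ' (u * v) - ρ' u * ρ' v = ∫ t, (f u (v * t) - ρ' u) * (f v t - ρ v) ∂μ := by
      rw [hA, hB, ← integral_sub hint1 hint2]
      have e1 : (fun t => f u (v * t) * f v t - ρ' u * f v t)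
          = fun t => (f u (v * t) - ρ' u) * ρ v + (f u (v * t) - ρ' u) * (f v t - ρ v) := by
        funext t; noncomm_ring
      rw [e1, integral_add hint3 hint4, hzero2, zero_add]
    rw [hD]
    exact hnormint _ _ hkey2
  -- measurability of the average, via continuity
  have hmem : MemLp ρ 1 μ :=
    (memLp_top_of_bound hmeas.aestronglyMeasurable C (.of_forall hρb)).mono_exponent le_top
  set F₀ : Lp A 1 μ := hmem.toLp ρ with hF₀
  set mulCM : G → C(G, G) := fun u => ⟨fun w => u * w, continuous_mul_left u⟩ with hmulCM
  have hmp : ∀ u : G, MeasurePreserving (mulCM u) μ μ := fun u => measurePreserving_mul_left μ u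
  set T : G → Lp A 1 μ := fun u => Lp.compMeasurePreserving (mulCM u) (hmp u) F₀ with hT
  have hTcont : Continuous T := by
    rw [continuous_iff_continuousAt]
    intro u
    refine ContinuousAt.compMeasurePreservingLp continuousAt_const ?_ hmp (by norm_num)
    exact (ContinuousMap.continuous_of_continuous_uncurry mulCM continuous_mul).continuousAt
  have hrep : ∀ u, (fun w => (T u : G → A) w * h w) =ᵐ[μ] f u := by
    intro u
    have h1 : (T u : G → A) =ᵐ[μ] F₀ ∘ (mulCM u) := Lp.coeFn_compMeasurePreserving F₀ (hmp u)
    have h2 : F₀ ∘ (mulCM u) =ᵐ[μ] ρ ∘ (mulCM u) :=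
      (hmp u).quasiMeasurePreserving.ae_eq_comp hmem.coeFn_toLp
    filter_upwards [h1, h2] with w hw1 hw2
    show (T u : G → A) w * h w = ρ (u * w) * h w
    rw [hw1, hw2]
    rfl
  have hTrep : ∀ u, ρ' u = ∫ w, (T u : G → A) w * h w ∂μ := fun u =>
    (integral_congr_ae (hrep u)).symm
  have hTint : ∀ u, Integrable (fun w => (T u : G → A) w * h w) μ := fun u =>
    (hfint u).congr (hrep u).symm
  have hdist : ∀ u' u : G, dist (ρ' u') (ρ' u) ≤ κ * dist (T u') (T u) := by
    intro u' u
    have hcoesub : (fun w => ‖(T u' - T u : Lp A 1 μ) w‖)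
        =ᵐ[μ] fun w => ‖(T u' : G → A) w - (T u : G → A) w‖ :=
      (Lp.coeFn_sub (T u') (T u)).mono fun w hw => by simp only [hw, Pi.sub_apply]
    rw [dist_eq_norm, hTrep u', hTrep u, ← integral_sub (hTint u') (hTint u)]
    have e1 : (fun w => (T u' : G → A) w * h w - (T u : G → A) w * h w)
        = fun w => ((T u' : G → A) w - (T u : G → A) w) * h w := by
      funext w; rw [sub_mul]
    rw [e1]
    calc ‖∫ w, ((T u' : G → A) w - (T u : G → A) w) * h w ∂μ‖
        ≤ ∫ w, ‖((T u' : G → A) w - (T u : G → A) w) * h w‖ ∂μ :=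
          norm_integral_le_integral_norm _
      _ ≤ ∫ w, ‖(T u' : G → A) w - (T u : G → A) w‖ * κ ∂μ := by
          refine integral_mono_of_nonneg (.of_forall fun w => norm_nonneg _) ?_
            (.of_forall fun w => ?_)
          · exact (((L1.integrable_coeFn (T u' - T u)).norm.congr hcoesub).mul_const κ)
          · exact (norm_mul_le _ _).trans (mul_le_mul_of_nonneg_left (hhb w) (norm_nonneg _))
      _ = (∫ w, ‖(T u' : G → A) w - (T u : G → A) w‖ ∂μ) * κ := integral_mul_const _ _
      _ = dist (T u') (T u) * κ := by
          rw [dist_eq_norm, L1.norm_eq_integral_norm (T u' - T u)]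
          exact congrArg (· * κ) (integral_congr_ae hcoesub).symm
      _ = κ * dist (T u') (T u) := mul_comm _ _
  have hρ'cont : Continuous ρ' := by
    rw [continuous_iff_continuousAt]
    intro u
    rw [ContinuousAt, tendsto_iff_dist_tendsto_zero]
    have h2 : Tendsto (fun u' => dist (T u') (T u)) (𝓝 u) (𝓝 0) := by
      have h3 : Continuous fun u' => dist (T u') (T u) := hTcont.dist continuous_const
      simpa using h3.tendsto u
    exact squeeze_zero (fun u' => dist_nonneg) (fun u' => hdist u' u)
      (by simpa using h2.const_mul κ)
  exact ⟨ρ', hρ'cont.measurable, hunit, hclose, hinvb, hmul'⟩
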